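/- arXiv:math/0702660 — 2 statements merged into one kernel-verified Lean document; each statement's English description precedes it below -/
import Mathlib

section
/- Suppose U_J : ℂ → ℝ satisfies U_J(ψ) ≥ A_J − B_J|ψ|² with A_J ∈ ℝ, B_J ≥ 0 and ∑_J B_J < m. Then for any Ψ = (ψ, π) ∈ H¹(ℝ) × L²(ℝ), the Hamiltonian H(Ψ) = ½∫(|π|² + |ψ'|² + m²|ψ|²)dx + ∑_J U_J(ψ(X_J)) satisfies ‖Ψ‖²_E ≤ (2m/(m − ∑_J B_J))·(H(Ψ) − ∑_J A_J), where ‖Ψ‖²_E = ‖π‖²_{L²} + ‖ψ'‖²_{L²} + m²‖ψ‖²_{L²}. -/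
open MeasureTheory

/-- Lower bound on the Hamiltonian: if `U_J(ψ) ≥ A_J − B_J|ψ|²` with `B_J ≥ 0` and
`∑ B_J < m`, then for `Ψ = (ψ, π) ∈ H¹(ℝ) × L²(ℝ)` one has
`‖Ψ‖²_E ≤ (2m/(m − ∑B_J))·(H(Ψ) − ∑A_J)`, where
`‖Ψ‖²_E = ‖π‖²_{L²} + ‖ψ'‖²_{L²} + m²‖ψ‖²_{L²}` and
`H(Ψ) = ½‖Ψ‖²_E + ∑_J U_J(ψ(X_J))`. -/
theorem stmt_4 (m : ℝ) (hm : 0 < m) (N : ℕ) (X : Fin N → ℝ)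
    (hX : ∀ i j : Fin N, i < j → X i < X j)
    (A B : Fin N → ℝ) (hB : ∀ J, 0 ≤ B J) (hBsum : ∑ J, B J < m)
    (U : Fin N → ℂ → ℝ)
    (hU : ∀ J, ∀ z : ℂ, A J - B J * ‖z‖ ^ 2 ≤ U J z)
    (ψ ψ' π : ℝ → ℂ)
    (hderiv : ∀ x, HasDerivAt ψ (ψ' x) x)
    (hψ : MemLp ψ 2 volume) (hψ' : MemLp ψ' 2 volume) (hπ : MemLp π 2 volume) :
    (∫ x, ‖π x‖ ^ 2) + (∫ x, ‖ψ' x‖ ^ 2) + m ^ 2 * ∫ x, ‖ψ x‖ ^ 2 ≤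
      (2 * m / (m - ∑ J, B J)) *
        ((1 / 2 * ((∫ x, ‖π x‖ ^ 2) + (∫ x, ‖ψ' x‖ ^ 2) + m ^ 2 * ∫ x, ‖ψ x‖ ^ 2)
          + ∑ J, U J (ψ (X J))) - ∑ J, A J) := by
  have hBpos : 0 < m - ∑ J, B J := sub_pos.2 hBsum
  have hnz : ∀ z : ℂ, ‖z‖ ^ 2 = z.re * z.re + z.im * z.im := fun z => by
    rw [← Complex.normSq_apply, ← Complex.sq_norm]
  set g : ℝ → ℝ := fun x => ‖ψ x‖ ^ 2 with hgdef
  set g' : ℝ → ℝ := fun x => (ψ' x).re * (ψ x).re + (ψ x).re * (ψ' x).re +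
      ((ψ' x).im * (ψ x).im + (ψ x).im * (ψ' x).im) with hg'def
  have hg : ∀ x, HasDerivAt g (g' x) x := by
    intro x
    have hre : HasDerivAt (fun y => (ψ y).re) ((ψ' x).re) x :=
      Complex.reCLM.hasFDerivAt.comp_hasDerivAt x (hderiv x)
    have him : HasDerivAt (fun y => (ψ y).im) ((ψ' x).im) x :=
      Complex.imCLM.hasFDerivAt.comp_hasDerivAt x (hderiv x)
    have h2 := (hre.mul hre).add (him.mul him)
    refine h2.congr_of_eventuallyEq ?_
    filter_upwards with y
    rw [hgdef]
    exact hnz (ψ y)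
  have hψcont : Continuous ψ := continuous_iff_continuousAt.2 fun x => (hderiv x).continuousAt
  have hψsq : Integrable (fun x => ‖ψ x‖ ^ 2) :=
    (memLp_two_iff_integrable_sq_norm hψ.1).1 hψ
  have hψ'sq : Integrable (fun x => ‖ψ' x‖ ^ 2) :=
    (memLp_two_iff_integrable_sq_norm hψ'.1).1 hψ'
  have hgint : Integrable g := hψsq
  set h : ℝ → ℝ := fun x => (m ^ 2 * ‖ψ x‖ ^ 2 + ‖ψ' x‖ ^ 2) / m with hhdef
  have hhint : Integrable h := ((hψsq.const_mul (m ^ 2)).add hψ'sq).div_const m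
  have hbound : ∀ x, |g' x| ≤ h x := by
    intro x
    have k1 : g' x * m ≤ m ^ 2 * ‖ψ x‖ ^ 2 + ‖ψ' x‖ ^ 2 := by
      simp only [hg'def, hnz]
      nlinarith [sq_nonneg (m * (ψ x).re - (ψ' x).re), sq_nonneg (m * (ψ x).im - (ψ' x).im)]
    have k2 : -g' x * m ≤ m ^ 2 * ‖ψ x‖ ^ 2 + ‖ψ' x‖ ^ 2 := by
      simp only [hg'def, hnz]
      nlinarith [sq_nonneg (m * (ψ x).re + (ψ' x).re), sq_nonneg (m * (ψ x).im + (ψ' x).im)]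
    rw [abs_le, hhdef]
    exact ⟨neg_le.2 (le_div_iff₀ hm |>.2 k2 |> fun t => by linarith [t]), (le_div_iff₀ hm).2 k1⟩
  have hg'meas : AEStronglyMeasurable g' volume := by
    have mre' : AEStronglyMeasurable (fun x => (ψ' x).re) volume :=
      Complex.continuous_re.comp_aestronglyMeasurable hψ'.1
    have mim' : AEStronglyMeasurable (fun x => (ψ' x).im) volume :=
      Complex.continuous_im.comp_aestronglyMeasurable hψ'.1
    have mre : AEStronglyMeasurable (fun x => (ψ x).re) volume :=
      (Complex.continuous_re.comp hψcont).aestronglyMeasurable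
    have mim : AEStronglyMeasurable (fun x => (ψ x).im) volume :=
      (Complex.continuous_im.comp hψcont).aestronglyMeasurable
    exact ((mre'.mul mre).add (mre.mul mre')).add ((mim'.mul mim).add (mim.mul mim'))
  have hg'int : Integrable g' :=
    hhint.mono' hg'meas (ae_of_all _ fun x => by rw [Real.norm_eq_abs]; exact hbound x)
  have htop : Filter.Tendsto g Filter.atTop (nhds 0) :=
    tendsto_zero_of_hasDerivAt_of_integrableOn_Ioi (a := 0) (fun x _ => hg x)
      hg'int.integrableOn hgint.integrableOn
  have hbot : Filter.Tendsto g Filter.atBot (nhds 0) :=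
    tendsto_zero_of_hasDerivAt_of_integrableOn_Iic (a := 0) (fun x _ => hg x)
      hg'int.integrableOn hgint.integrableOn
  have sob : ∀ x0 : ℝ, 2 * g x0 ≤ ∫ x, h x := by
    intro x0
    have h1 : ∫ x in Set.Ioi x0, g' x = 0 - g x0 :=
      integral_Ioi_of_hasDerivAt_of_tendsto' (fun x _ => hg x) hg'int.integrableOn htop
    have h2 : ∫ x in Set.Iic x0, g' x = g x0 - 0 :=
      integral_Iic_of_hasDerivAt_of_tendsto' (fun x _ => hg x) hg'int.integrableOn hbot
    have b1 : ∫ x in Set.Iic x0, g' x ≤ ∫ x in Set.Iic x0, h x :=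
      setIntegral_mono_on hg'int.integrableOn hhint.integrableOn measurableSet_Iic
        (fun x _ => (abs_le.1 (hbound x)).2)
    have b2 : -∫ x in Set.Ioi x0, g' x ≤ ∫ x in Set.Ioi x0, h x := by
      rw [← integral_neg]
      exact setIntegral_mono_on hg'int.neg.integrableOn hhint.integrableOn measurableSet_Ioi
        (fun x _ => neg_le.1 (abs_le.1 (hbound x)).1)
    have hsplit : (∫ x in Set.Iic x0, h x) + (∫ x in Set.Ioi x0, h x) = ∫ x, h x :=
      intervalIntegral.integral_Iic_add_Ioi hhint.integrableOn hhint.integrableOn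
    linarith
  have hinth : ∫ x, h x = (m ^ 2 * (∫ x, g x) + ∫ x, ‖ψ' x‖ ^ 2) / m := by
    rw [hhdef]
    rw [integral_div, integral_add (hψsq.const_mul _) hψ'sq, integral_const_mul]
  have sob2 : ∀ x0 : ℝ, 2 * m * g x0 ≤ (∫ x, ‖ψ' x‖ ^ 2) + m ^ 2 * ∫ x, g x := by
    intro x0
    have h1 := sob x0
    rw [hinth, le_div_iff₀ hm] at h1
    nlinarith [h1]
  have hI1 : 0 ≤ ∫ x, ‖π x‖ ^ 2 := integral_nonneg fun x => sq_nonneg _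
  set E : ℝ := (∫ x, ‖π x‖ ^ 2) + (∫ x, ‖ψ' x‖ ^ 2) + m ^ 2 * ∫ x, g x with hEdef
  have hJ : ∀ J, 2 * m * (A J - U J (ψ (X J))) ≤ B J * E := by
    intro J
    have ha := hU J (ψ (X J))
    have hs := sob2 (X J)
    have h0 : (0:ℝ) ≤ g (X J) := sq_nonneg ‖ψ (X J)‖
    have ha' : A J - B J * g (X J) ≤ U J (ψ (X J)) := ha
    rw [hEdef]
    nlinarith [mul_le_mul_of_nonneg_left ha' (by positivity : (0:ℝ) ≤ 2 * m),
      mul_le_mul_of_nonneg_left hs (hB J), mul_nonneg (hB J) hI1, hm, hB J]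
  have hsum : 2 * m * (∑ J, A J) - 2 * m * (∑ J, U J (ψ (X J))) ≤ (∑ J, B J) * E := by
    have h1 : ∑ J, (2 * m * (A J - U J (ψ (X J)))) ≤ ∑ J, B J * E :=
      Finset.sum_le_sum fun J _ => hJ J
    have h2 : ∑ J, (B J * E) = (∑ J, B J) * E := (Finset.sum_mul _ _ _).symm
    have h3 : ∑ J, (2 * m * (A J - U J (ψ (X J)))) =
        2 * m * (∑ J, A J) - 2 * m * (∑ J, U J (ψ (X J))) := by
      rw [← Finset.mul_sum, Finset.sum_sub_distrib, mul_sub]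
    linarith
  rw [div_mul_eq_mul_div, le_div_iff₀ hBpos]
  nlinarith [hsum]
end

section
/- For N point interactions at X_1 < ⋯ < X_N and ω ∈ (−m, m) with κ(ω) = √(m² − ω²), the profile φ_ω(x) = ∑_J C_J e^{−κ(ω)|x−X_J|} gives a solitary wave solution φ_ω(x)e^{−iωt} of ψ̈ = ψ'' − m²ψ + ∑_J δ(x−X_J)F_J(ψ(X_J,t)) if and only if the coefficients satisfy 2κ(ω)C_J = F_J(∑_K C_K e^{−κ(ω)|X_J − X_K|}) for every J. -/
open Set

noncomputable def Eabs (κ a : ℝ) : ℝ → ℂ := fun y => Complex.exp (((-(κ * |y - a|)) : ℝ) : ℂ)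

lemma expLin_hasDerivAt (c : ℂ) (a x : ℝ) :
    HasDerivAt (fun y : ℝ => Complex.exp (c * ((y : ℂ) - (a : ℂ))))
      (c * Complex.exp (c * ((x : ℂ) - (a : ℂ)))) x := by
  have h1 : HasDerivAt (fun y : ℝ => ((y : ℂ) - (a : ℂ))) 1 x := by
    simpa using (Complex.ofRealCLM.hasDerivAt (x := x)).sub_const (a : ℂ)
  have h2 := (h1.const_mul c).cexp
  simpa [mul_comm] using h2

lemma Eabs_eq_right {κ a y : ℝ} (h : a ≤ y) :
    Eabs κ a y = Complex.exp ((-(κ:ℂ)) * ((y:ℂ) - (a:ℂ))) := by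
  unfold Eabs
  rw [abs_of_nonneg (by linarith)]
  push_cast
  ring_nf

lemma Eabs_eq_left {κ a y : ℝ} (h : y ≤ a) :
    Eabs κ a y = Complex.exp (((κ:ℂ)) * ((y:ℂ) - (a:ℂ))) := by
  unfold Eabs
  rw [abs_of_nonpos (by linarith)]
  push_cast
  ring_nf

lemma Eabs_self (κ a : ℝ) : Eabs κ a a = 1 := by
  simp [Eabs]

lemma Eabs_hasDerivWithinAt_Ici (κ a : ℝ) :
    HasDerivWithinAt (Eabs κ a) (-(κ:ℂ) * Eabs κ a a) (Ici a) a := by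
  have h := (expLin_hasDerivAt (-(κ:ℂ)) a a).hasDerivWithinAt (s := Ici a)
  rw [Eabs_eq_right (le_refl a)]
  exact h.congr (fun y hy => Eabs_eq_right hy) (Eabs_eq_right (le_refl a))

lemma Eabs_hasDerivWithinAt_Iic (κ a : ℝ) :
    HasDerivWithinAt (Eabs κ a) ((κ:ℂ) * Eabs κ a a) (Iic a) a := by
  have h := (expLin_hasDerivAt ((κ:ℂ)) a a).hasDerivWithinAt (s := Iic a)
  rw [Eabs_eq_left (le_refl a)]
  exact h.congr (fun y hy => Eabs_eq_left hy) (Eabs_eq_left (le_refl a))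

lemma Eabs_eventuallyEq_of_lt {κ a x : ℝ} (h : a < x) :
    Eabs κ a =ᶠ[nhds x] fun y : ℝ => Complex.exp ((-(κ:ℂ)) * ((y : ℂ) - (a : ℂ))) := by
  filter_upwards [Ioi_mem_nhds h] with y hy
  exact Eabs_eq_right (le_of_lt hy)

lemma Eabs_eventuallyEq_of_gt {κ a x : ℝ} (h : x < a) :
    Eabs κ a =ᶠ[nhds x] fun y : ℝ => Complex.exp (((κ:ℂ)) * ((y : ℂ) - (a : ℂ))) := by
  filter_upwards [Iio_mem_nhds h] with y hy
  exact Eabs_eq_left (le_of_lt hy)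

lemma Eabs_hasDerivAt_of_lt {κ a x : ℝ} (h : a < x) :
    HasDerivAt (Eabs κ a) (-(κ:ℂ) * Eabs κ a x) x := by
  rw [Eabs_eq_right (le_of_lt h)]
  exact (expLin_hasDerivAt (-(κ:ℂ)) a x).congr_of_eventuallyEq (Eabs_eventuallyEq_of_lt h)

lemma Eabs_hasDerivAt_of_gt {κ a x : ℝ} (h : x < a) :
    HasDerivAt (Eabs κ a) ((κ:ℂ) * Eabs κ a x) x := by
  rw [Eabs_eq_left (le_of_lt h)]
  exact (expLin_hasDerivAt ((κ:ℂ)) a x).congr_of_eventuallyEq (Eabs_eventuallyEq_of_gt h)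

/-- Off the interaction points, the profile is twice differentiable and satisfies the ODE. -/
lemma ode_lemma (κ : ℝ) {N : ℕ} (X : Fin N → ℝ) (C : Fin N → ℂ) {x : ℝ}
    (hx : ∀ K, x ≠ X K) :
    DifferentiableAt ℝ (fun y => ∑ K, C K * Eabs κ (X K) y) x ∧
    DifferentiableAt ℝ (deriv (fun y => ∑ K, C K * Eabs κ (X K) y)) x ∧
    deriv (deriv (fun y => ∑ K, C K * Eabs κ (X K) y)) x
      = ((κ:ℂ))^2 * (fun y => ∑ K, C K * Eabs κ (X K) y) x := by
  set Φ : ℝ → ℂ := fun y => ∑ K, C K * Eabs κ (X K) y with hΦdef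
  set c : Fin N → ℂ := fun K => if X K < x then -(κ:ℂ) else (κ:ℂ) with hc
  have hc2 : ∀ K, c K * c K = (κ:ℂ)^2 := by
    intro K; by_cases h : X K < x <;> simp [hc, h] <;> ring
  set G : ℝ → ℂ := fun y => ∑ K, C K * Complex.exp (c K * ((y:ℂ) - (X K : ℂ))) with hG
  set G1 : ℝ → ℂ := fun y => ∑ K, C K * c K * Complex.exp (c K * ((y:ℂ) - (X K : ℂ))) with hG1
  have hGd : ∀ y, HasDerivAt G (G1 y) y := by
    intro y
    have := HasDerivAt.fun_sum (u := Finset.univ)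
      (fun K _ => ((expLin_hasDerivAt (c K) (X K) y).const_mul (C K)))
    simp only [hG, hG1]
    exact this.congr_deriv (Finset.sum_congr rfl fun K _ => by ring)
  have hG1d : ∀ y : ℝ, HasDerivAt G1
      (∑ K, C K * c K * (c K * Complex.exp (c K * ((y:ℂ) - (X K : ℂ))))) y := by
    intro y
    exact HasDerivAt.fun_sum (u := Finset.univ)
      (fun K _ => ((expLin_hasDerivAt (c K) (X K) y).const_mul (C K * c K)))
  have hKev : ∀ K, (Eabs κ (X K)) =ᶠ[nhds x]
      fun y : ℝ => Complex.exp (c K * ((y : ℂ) - (X K : ℂ))) := by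
    intro K
    by_cases h : X K < x
    · simp only [hc, if_pos h]; exact Eabs_eventuallyEq_of_lt h
    · have h' : x < X K := lt_of_le_of_ne (not_lt.1 h) (hx K)
      simp only [hc, if_neg h]; exact Eabs_eventuallyEq_of_gt h'
  have hΦG : Φ =ᶠ[nhds x] G := by
    have hall : ∀ᶠ y in nhds x, ∀ K, Eabs κ (X K) y
        = Complex.exp (c K * ((y : ℂ) - (X K : ℂ))) := by
      rw [Filter.eventually_all]
      exact fun K => hKev K
    filter_upwards [hall] with y hy
    exact Finset.sum_congr rfl fun K _ => by rw [hy K]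
  have hΦd : HasDerivAt Φ (G1 x) x := (hGd x).congr_of_eventuallyEq hΦG
  have hderivG : deriv G = G1 := funext fun y => (hGd y).deriv
  have hderivΦ : deriv Φ =ᶠ[nhds x] G1 := by
    have := hΦG.deriv
    rwa [hderivG] at this
  have hΦ2 : HasDerivAt (deriv Φ)
      (∑ K, C K * c K * (c K * Complex.exp (c K * ((x:ℂ) - (X K : ℂ))))) x :=
    (hG1d x).congr_of_eventuallyEq hderivΦ
  refine ⟨hΦd.differentiableAt, hΦ2.differentiableAt, ?_⟩
  rw [hΦ2.deriv]
  have hΦx : Φ x = G x := hΦG.eq_of_nhds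
  rw [hΦx]
  simp only [hG, Finset.mul_sum]
  apply Finset.sum_congr rfl
  intro K _
  rw [← hc2 K]
  ring

/-- The one-sided derivatives and the jump at an interaction point. -/
lemma jump_lemma (κ : ℝ) {N : ℕ} (X : Fin N → ℝ) (C : Fin N → ℂ) (J : Fin N)
    (hne : ∀ K, K ≠ J → X K ≠ X J) :
    HasDerivWithinAt (fun y => ∑ K, C K * Eabs κ (X K) y)
      (∑ K, C K * (if X J < X K then (κ:ℂ) else -(κ:ℂ)) * Eabs κ (X K) (X J))
      (Ioi (X J)) (X J) ∧
    HasDerivWithinAt (fun y => ∑ K, C K * Eabs κ (X K) y)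
      (∑ K, C K * (if X K < X J then -(κ:ℂ) else (κ:ℂ)) * Eabs κ (X K) (X J))
      (Iio (X J)) (X J) ∧
    (∑ K, C K * (if X J < X K then (κ:ℂ) else -(κ:ℂ)) * Eabs κ (X K) (X J))
      - (∑ K, C K * (if X K < X J then -(κ:ℂ) else (κ:ℂ)) * Eabs κ (X K) (X J))
      = -(2 * (κ:ℂ) * C J) := by
  refine ⟨?_, ?_, ?_⟩
  · apply HasDerivWithinAt.fun_sum
    intro K _
    rcases lt_trichotomy (X K) (X J) with h | h | h
    · have := ((Eabs_hasDerivAt_of_lt (κ := κ) h).const_mul (C K)).hasDerivWithinAt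
        (s := Ioi (X J))
      rw [if_neg (not_lt.2 (le_of_lt h))]
      convert this using 1; ring
    · have := ((Eabs_hasDerivWithinAt_Ici κ (X J)).mono Ioi_subset_Ici_self).const_mul (C K)
      rw [h, if_neg (lt_irrefl (X J))]
      exact this.congr_deriv (by ring)
    · have := ((Eabs_hasDerivAt_of_gt (κ := κ) h).const_mul (C K)).hasDerivWithinAt
        (s := Ioi (X J))
      rw [if_pos h]
      convert this using 1; ring
  · apply HasDerivWithinAt.fun_sum
    intro K _
    rcases lt_trichotomy (X K) (X J) with h | h | h
    · have := ((Eabs_hasDerivAt_of_lt (κ := κ) h).const_mul (C K)).hasDerivWithinAt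
        (s := Iio (X J))
      rw [if_pos h]
      convert this using 1; ring
    · have := ((Eabs_hasDerivWithinAt_Iic κ (X J)).mono Iio_subset_Iic_self).const_mul (C K)
      rw [h, if_neg (lt_irrefl (X J))]
      exact this.congr_deriv (by ring)
    · have := ((Eabs_hasDerivAt_of_gt (κ := κ) h).const_mul (C K)).hasDerivWithinAt
        (s := Iio (X J))
      rw [if_neg (not_lt.2 (le_of_lt h))]
      convert this using 1; ring
  · rw [← Finset.sum_sub_distrib]
    rw [Finset.sum_eq_single_of_mem J (Finset.mem_univ J)]
    · rw [if_neg (lt_irrefl (X J)), if_neg (lt_irrefl (X J)), Eabs_self]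
      ring
    · intro K _ hK
      rcases (hne K hK).lt_or_gt with h | h
      · rw [if_neg (not_lt.2 (le_of_lt h)), if_pos h, sub_self]
      · rw [if_pos h, if_neg (not_lt.2 (le_of_lt h)), sub_self]

/-- Solitary waves for the Klein-Gordon field coupled to `N` oscillators:
the profile `φ_ω(x) = ∑_J C_J e^{−κ(ω)|x−X_J|}` gives a solitary wave
`φ_ω(x)e^{−iωt}` of `ψ̈ = ψ'' − m²ψ + ∑_J δ(x−X_J)F_J(ψ(X_J,t))`
(i.e. `φ'' = κ²φ = (m²−ω²)φ` away from the points `X_J` together with the jump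
conditions `φ'(X_J+0) − φ'(X_J−0) = −F_J(φ(X_J))`) if and only if
`2κ(ω)C_J = F_J(∑_K C_K e^{−κ(ω)|X_J−X_K|})` for every `J`. -/
theorem stmt_10 (m ω : ℝ) (hm : 0 < m) (hω : |ω| < m)
    (κ : ℝ) (hκ : κ = Real.sqrt (m ^ 2 - ω ^ 2))
    (N : ℕ) (X : Fin N → ℝ) (hX : ∀ i j : Fin N, i < j → X i < X j)
    (F : Fin N → ℂ → ℂ)
    (hF : ∀ J, ∀ θ : ℝ, ∀ z : ℂ,
      F J (Complex.exp ((θ : ℂ) * Complex.I) * z)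
        = Complex.exp ((θ : ℂ) * Complex.I) * F J z)
    (C : Fin N → ℂ) (φ : ℝ → ℂ)
    (hφ : ∀ x : ℝ, φ x = ∑ J, C J * Complex.exp (((-(κ * |x - X J|)) : ℝ) : ℂ)) :
    ((∀ x : ℝ, x ∉ Set.range X → DifferentiableAt ℝ φ x ∧ DifferentiableAt ℝ (deriv φ) x ∧
        deriv (deriv φ) x = (((m ^ 2 - ω ^ 2 : ℝ)) : ℂ) * φ x) ∧
      (∀ J : Fin N, ∃ dplus dminus : ℂ,
        HasDerivWithinAt φ dplus (Ioi (X J)) (X J) ∧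
        HasDerivWithinAt φ dminus (Iio (X J)) (X J) ∧
        dplus - dminus = -(F J (φ (X J)))))
    ↔ ∀ J : Fin N,
        2 * (κ : ℂ) * C J
          = F J (∑ K, C K * Complex.exp (((-(κ * |X J - X K|)) : ℝ) : ℂ)) := by
  have hmono : StrictMono X := fun i j h => hX i j h
  have hinj : Function.Injective X := hmono.injective
  have hne : ∀ J : Fin N, ∀ K, K ≠ J → X K ≠ X J := fun J K hK h => hK (hinj h)
  have hφeq : φ = fun y => ∑ K, C K * Eabs κ (X K) y := funext fun y => hφ y
  have hκ2 : (κ:ℝ)^2 = m^2 - ω^2 := by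
    rw [hκ]
    apply Real.sq_sqrt
    nlinarith [abs_nonneg ω, sq_abs ω]
  constructor
  · rintro ⟨h1, h2⟩ J
    obtain ⟨dp, dm, hp, hmn, hd⟩ := h2 J
    obtain ⟨hp', hm', hdiff⟩ := jump_lemma κ X C J (hne J)
    rw [hφeq] at hp hmn
    have hup : dp = ∑ K, C K * (if X J < X K then (κ:ℂ) else -(κ:ℂ)) * Eabs κ (X K) (X J) :=
      (hp.derivWithin (uniqueDiffWithinAt_Ioi (X J))).symm.trans
        (hp'.derivWithin (uniqueDiffWithinAt_Ioi (X J)))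
    have hum : dm = ∑ K, C K * (if X K < X J then -(κ:ℂ) else (κ:ℂ)) * Eabs κ (X K) (X J) :=
      (hmn.derivWithin (uniqueDiffWithinAt_Iio (X J))).symm.trans
        (hm'.derivWithin (uniqueDiffWithinAt_Iio (X J)))
    have key : -(2 * (κ:ℂ) * C J) = -(F J (φ (X J))) := by
      rw [← hdiff, ← hup, ← hum]; exact hd
    have key' : 2 * (κ:ℂ) * C J = F J (φ (X J)) := neg_injective key
    rw [hφ (X J)] at key'
    exact key'
  · intro h
    constructor
    · intro x hx
      have hx' : ∀ K, x ≠ X K := fun K hk => hx ⟨K, hk.symm⟩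
      obtain ⟨d1, d2, d3⟩ := ode_lemma κ X C hx'
      rw [hφeq]
      refine ⟨d1, d2, ?_⟩
      rw [d3]
      congr 1
      rw [← hκ2]
      push_cast
      ring
    · intro J
      obtain ⟨hp', hm', hdiff⟩ := jump_lemma κ X C J (hne J)
      refine ⟨_, _, by rw [hφeq]; exact hp', by rw [hφeq]; exact hm', ?_⟩
      rw [hdiff, hφ (X J), ← h J]
end
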